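/- Let $f:\mathbb{R}^d\to\mathbb{R}$ be $L$-smooth and $f_\nu(x) = \mathbb{E}_{u\sim U_B}[f(x+\nu u)]$ its smoothing over the unit ball. Then for any $x\in\mathbb{R}^d$, $\|\nabla f_\nu(x) - \nabla f(x)\| \le \frac{\nu L d}{2}$. -/

import Mathlib

open MeasureTheory Metric Set

lemma integral_norm_ball {E : Type*} [NormedAddCommGroup E] [NormedSpace ℝ E] [MeasureSpace E]
    [BorelSpace E] [FiniteDimensional ℝ E] [Nontrivial E] [(volume : Measure E).IsAddHaarMeasure] :
    ∫ u in ball (0:E) 1, ‖u‖ ∂volume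
      = (Module.finrank ℝ E / (Module.finrank ℝ E + 1) : ℝ) * (volume (ball (0:E) 1)).toReal := by
  set n := Module.finrank ℝ E with hn
  have hpos : 0 < n := Module.finrank_pos
  have key := MeasureTheory.integral_fun_norm_addHaar (volume : Measure E)
    (fun y : ℝ => (Iio (1:ℝ)).indicator id y)
  have h1 : (∫ x : E, (Iio (1:ℝ)).indicator id ‖x‖ ∂volume) = ∫ u in ball (0:E) 1, ‖u‖ ∂volume := by
    rw [← integral_indicator measurableSet_ball]
    congr 1 with x
    by_cases h : ‖x‖ < 1
    · simp [Set.indicator_of_mem, h, mem_ball_zero_iff.mpr h]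
    · simp [Set.indicator_of_notMem, h, fun hh => h (mem_ball_zero_iff.mp hh),
        mem_ball_zero_iff]
  have h2 : (∫ y in Ioi (0:ℝ), y ^ (n - 1) • (Iio (1:ℝ)).indicator id y) = 1 / (n + 1 : ℝ) := by
    have : ∀ y : ℝ, y ^ (n-1) • (Iio (1:ℝ)).indicator id y
        = (Iio (1:ℝ)).indicator (fun y => y ^ (n-1) * y) y := by
      intro y
      by_cases h : y < 1 <;> simp [Set.indicator_of_mem, Set.indicator_of_notMem, h]
    simp_rw [this]
    rw [integral_indicator measurableSet_Iio, Measure.restrict_restrict measurableSet_Iio,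
      Iio_inter_Ioi, ← integral_Ioc_eq_integral_Ioo, ← intervalIntegral.integral_of_le zero_le_one]
    have : ∀ y : ℝ, y ^ (n-1) * y = y ^ n := by
      intro y; rw [← pow_succ, Nat.sub_add_cancel hpos]
    simp_rw [this, integral_pow]
    simp
  rw [h1, h2] at key
  rw [key]
  simp only [nsmul_eq_mul, smul_eq_mul]
  rw [← hn, measureReal_def]
  ring

/-- Gradient error of the uniform smoothing over the unit ball:
`‖∇f_ν(x) - ∇f(x)‖ ≤ ν L d / 2`, where `∇f_ν(x) = 𝔼_{u ∼ U_B}[∇f(x + ν u)]`. -/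
theorem smoothing_gradient_error {d : ℕ} (f fν : EuclideanSpace ℝ (Fin d) → ℝ)
    (L ν : ℝ) (hν : 0 < ν) (hL : 0 < L)
    (hdiff : Differentiable ℝ f) (hdiffν : Differentiable ℝ fν)
    (hlip : ∀ x y, ‖gradient f x - gradient f y‖ ≤ L * ‖x - y‖)
    (hfν : ∀ y, fν y = ⨍ u in Metric.ball (0 : EuclideanSpace ℝ (Fin d)) 1, f (y + ν • u))
    (hgradν : ∀ y, gradient fν y
      = ⨍ u in Metric.ball (0 : EuclideanSpace ℝ (Fin d)) 1, gradient f (y + ν • u))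
    (x : EuclideanSpace ℝ (Fin d)) :
    ‖gradient fν x - gradient f x‖ ≤ ν * L * d / 2 := by
  rcases Nat.eq_zero_or_pos d with hd | hd
  · subst hd
    have : gradient fν x - gradient f x = 0 := Subsingleton.elim _ _
    simp [this]
  haveI : Nontrivial (EuclideanSpace ℝ (Fin d)) :=
    Module.nontrivial_of_finrank_pos (R := ℝ)
      (by rw [finrank_euclideanSpace_fin]; exact hd)
  have hB0 : volume (Metric.ball (0 : EuclideanSpace ℝ (Fin d)) 1) ≠ 0 :=
    (measure_ball_pos volume 0 one_pos).ne'
  have hBt : volume (Metric.ball (0 : EuclideanSpace ℝ (Fin d)) 1) ≠ ⊤ :=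
    measure_ball_lt_top.ne
  set V := (volume (Metric.ball (0 : EuclideanSpace ℝ (Fin d)) 1)).toReal with hV
  have hVpos : 0 < V := ENNReal.toReal_pos hB0 hBt
  have hgc : Continuous (gradient f) := by
    refine (LipschitzWith.of_dist_le_mul (K := L.toNNReal) fun a b => ?_).continuous
    rw [dist_eq_norm, dist_eq_norm, Real.coe_toNNReal _ hL.le]
    exact hlip a b
  have hcont : Continuous fun u : EuclideanSpace ℝ (Fin d) => gradient f (x + ν • u) :=
    hgc.comp (continuous_const.add (continuous_const_smul ν))
  have hint : IntegrableOn (fun u => gradient f (x + ν • u))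
      (Metric.ball (0 : EuclideanSpace ℝ (Fin d)) 1) volume :=
    (hcont.continuousOn.integrableOn_compact
      (isCompact_closedBall (0 : EuclideanSpace ℝ (Fin d)) 1)).mono_set
      Metric.ball_subset_closedBall
  have hintc : IntegrableOn (fun _ : EuclideanSpace ℝ (Fin d) => gradient f x)
      (Metric.ball (0 : EuclideanSpace ℝ (Fin d)) 1) volume :=
    integrableOn_const hBt
  have key : gradient fν x - gradient f x
      = V⁻¹ • ∫ u in Metric.ball (0 : EuclideanSpace ℝ (Fin d)) 1,
          (gradient f (x + ν • u) - gradient f x) := by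
    rw [hgradν, setAverage_eq, integral_sub hint hintc, smul_sub, setIntegral_const, measureReal_def, ← hV,
      smul_smul, inv_mul_cancel₀ hVpos.ne', one_smul]
  have hptw : ∀ u : EuclideanSpace ℝ (Fin d),
      ‖gradient f (x + ν • u) - gradient f x‖ ≤ L * ν * ‖u‖ := by
    intro u
    calc ‖gradient f (x + ν • u) - gradient f x‖ ≤ L * ‖x + ν • u - x‖ := hlip _ _
      _ = L * ν * ‖u‖ := by
          rw [add_sub_cancel_left, norm_smul, Real.norm_eq_abs, abs_of_pos hν, mul_assoc]
  have hintb : IntegrableOn (fun u : EuclideanSpace ℝ (Fin d) => L * ν * ‖u‖)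
      (Metric.ball (0 : EuclideanSpace ℝ (Fin d)) 1) volume :=
    ((Continuous.continuousOn (by continuity)).integrableOn_compact
      (isCompact_closedBall (0 : EuclideanSpace ℝ (Fin d)) 1)).mono_set
      Metric.ball_subset_closedBall
  have hb1 : ‖∫ u in Metric.ball (0 : EuclideanSpace ℝ (Fin d)) 1,
        (gradient f (x + ν • u) - gradient f x)‖
      ≤ ∫ u in Metric.ball (0 : EuclideanSpace ℝ (Fin d)) 1, L * ν * ‖u‖ :=
    norm_integral_le_of_norm_le hintb (Filter.Eventually.of_forall hptw)
  have hb2 : (∫ u in Metric.ball (0 : EuclideanSpace ℝ (Fin d)) 1, L * ν * ‖u‖)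
      = L * ν * ((d / (d + 1) : ℝ) * V) := by
    rw [integral_const_mul, integral_norm_ball]
    simp [finrank_euclideanSpace_fin, hV]
  rw [key, norm_smul, Real.norm_eq_abs, abs_of_pos (inv_pos.2 hVpos)]
  have hstep : V⁻¹ * ‖∫ u in Metric.ball (0 : EuclideanSpace ℝ (Fin d)) 1,
        (gradient f (x + ν • u) - gradient f x)‖ ≤ ν * L * ((d : ℝ) / (d + 1)) := by
    calc V⁻¹ * ‖∫ u in Metric.ball (0 : EuclideanSpace ℝ (Fin d)) 1,
          (gradient f (x + ν • u) - gradient f x)‖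
        ≤ V⁻¹ * (L * ν * ((d / (d + 1) : ℝ) * V)) := by
          rw [← hb2]; exact mul_le_mul_of_nonneg_left hb1 (inv_pos.2 hVpos).le
      _ = ν * L * ((d : ℝ) / (d + 1)) := by field_simp
  refine hstep.trans ?_
  have h1 : (d : ℝ) / (d + 1) ≤ (d : ℝ) / 2 := by
    apply div_le_div_of_nonneg_left (by positivity) (by norm_num)
    have : (1 : ℝ) ≤ (d : ℝ) := by exact_mod_cast hd
    linarith
  calc ν * L * ((d : ℝ) / (d + 1)) ≤ ν * L * ((d : ℝ) / 2) := by
        exact mul_le_mul_of_nonneg_left h1 (by positivity)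
    _ = ν * L * d / 2 := by ring
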